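/- Under the setup of the rational gl(2) spin chain: if t(λ) is a polynomial of degree N with leading coefficient tr K satisfying t(ξ_a)t(ξ_a - η) = a(ξ_a)d(ξ_a - η) det K for all a (the fusion relations), and |t⟩ is the vector defined in the SoV covector basis ⟨h_1,...,h_N| = ⟨S| ∏_a (T(ξ_a)/a(ξ_a))^{h_a} by ⟨h_1,...,h_N|t⟩ = ∏_{n=1}^N (t(ξ_n)/a(ξ_n))^{h_n}, then T(λ)|t⟩ = t(λ)|t⟩ for all λ, provided that (1) the covectors form a basis, (2) T(λ) is the polynomial of degree N in λ with leading operator coefficient (tr K)·Id interpolating its values at the points ξ_a^{(h_a)} = ξ_a - h_a η, and (3) T satisfies the operator fusion relations T(ξ_a)T(ξ_a - η) = a(ξ_a)d(ξ_a - η)(det K)·Id. -/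

import Mathlib

open Polynomial in
lemma interp_formula {N : ℕ} (x : Fin N → ℂ) (hx : Function.Injective x)
    (t : Polynomial ℂ) (ht : t.natDegree = N) (lam : ℂ) :
    t.eval lam = t.leadingCoeff * ∏ i, (lam - x i)
      + ∑ i, (∏ j ∈ Finset.univ.erase i, ((lam - x j) / (x i - x j))) * t.eval (x i) := by
  classical
  set l := t.leadingCoeff with hl
  set p : Polynomial ℂ := Polynomial.C l * ∏ i, (Polynomial.X - Polynomial.C (x i)) with hp
  have hpev : ∀ y, p.eval y = l * ∏ i, (y - x i) := by
    intro y; simp [hp, Polynomial.eval_prod]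
  have hq : (t - p).degree < ((N : ℕ) : WithBot ℕ) := by
    rcases eq_or_ne t 0 with h0 | h0
    · have hl0 : l = 0 := by simp [hl, h0]
      simp only [hp, hl0, Polynomial.C_0, zero_mul, h0, sub_zero, Polynomial.degree_zero]
      exact bot_lt_iff_ne_bot.mpr (by simp)
    · have hlne : l ≠ 0 := Polynomial.leadingCoeff_ne_zero.mpr h0
      have hmon : (∏ i, (Polynomial.X - Polynomial.C (x i))).Monic :=
        Polynomial.monic_prod_of_monic _ _ (fun i _ => Polynomial.monic_X_sub_C _)
      have hdprod : (∏ i, (Polynomial.X - Polynomial.C (x i))).degree = (N : WithBot ℕ) := by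
        rw [Polynomial.degree_prod]
        simp [Polynomial.degree_X_sub_C]
      have hdp : p.degree = (N : WithBot ℕ) := by
        rw [hp, Polynomial.degree_mul, Polynomial.degree_C hlne, hdprod, zero_add]
      have hdt : t.degree = (N : WithBot ℕ) := by
        rw [Polynomial.degree_eq_natDegree h0, ht]
      have hlcp : t.leadingCoeff = p.leadingCoeff := by
        rw [hp, Polynomial.leadingCoeff_mul, Polynomial.leadingCoeff_C, hmon.leadingCoeff,
          mul_one]
      have := Polynomial.degree_sub_lt (hdt.trans hdp.symm) h0 hlcp
      rwa [hdt] at this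
  have hinj : Set.InjOn x (Finset.univ : Finset (Fin N)) := hx.injOn
  have hcard : (t - p).degree < (((Finset.univ : Finset (Fin N)).card : ℕ) : WithBot ℕ) := by
    simpa using hq
  have hint := Lagrange.eq_interpolate hinj hcard
  have hqi : ∀ i, (t - p).eval (x i) = t.eval (x i) := by
    intro i
    have : (∏ k, (x i - x k)) = 0 :=
      Finset.prod_eq_zero (Finset.mem_univ i) (by ring)
    simp [hpev, this]
  have heval := congrArg (Polynomial.eval lam) hint
  rw [Lagrange.interpolate_apply, Polynomial.eval_finset_sum] at heval
  have hbasis : ∀ i, (Polynomial.C ((t - p).eval (x i)) * Lagrange.basis Finset.univ x i).eval lam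
      = (∏ j ∈ Finset.univ.erase i, ((lam - x j) / (x i - x j))) * t.eval (x i) := by
    intro i
    rw [Polynomial.eval_mul, Polynomial.eval_C, hqi]
    rw [Lagrange.basis, Polynomial.eval_prod]
    rw [mul_comm]
    congr 1
    refine Finset.prod_congr rfl fun j _ => ?_
    simp [Lagrange.basisDivisor, div_eq_inv_mul, mul_comm]
  rw [Finset.sum_congr rfl (fun i _ => hbasis i)] at heval
  rw [Polynomial.eval_sub, hpev] at heval
  linear_combination heval

theorem stmt13 {H : Type*} [AddCommGroup H] [Module ℂ H]
    {N : ℕ} (ξ : Fin N → ℂ) (η : ℂ) (hη : η ≠ 0)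
    (hξ : ∀ a b : Fin N, a ≠ b → ∀ r : ℤ, r ∈ ({-1, 0, 1} : Set ℤ) →
      ξ a ≠ ξ b + (r : ℂ) * η)
    (K : Matrix (Fin 2) (Fin 2) ℂ)
    (T : ℂ → Module.End ℂ H)
    (hcomm : ∀ l m : ℂ, T l * T m = T m * T l)
    (af df : ℂ → ℂ)
    (haf : ∀ lam, af lam = ∏ i, (lam - ξ i + η))
    (hdf : ∀ lam, df lam = ∏ i, (lam - ξ i))
    (S : Module.Dual ℂ H)
    (b : Module.Basis (Fin N → Fin 2) ℂ (Module.Dual ℂ H))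
    (hb : ∀ h : Fin N → Fin 2,
      b h = S ∘ₗ (Finset.univ.noncommProd
        (fun i : Fin N => ((af (ξ i))⁻¹ • T (ξ i)) ^ ((h i : ℕ)))
        (by
          intro i _ j _ _
          have : Commute ((af (ξ i))⁻¹ • T (ξ i)) ((af (ξ j))⁻¹ • T (ξ j)) :=
            ((Commute.smul_left (hcomm (ξ i) (ξ j)) _).smul_right _)
          exact this.pow_pow _ _)))
    (hinterp : ∀ (h : Fin N → Fin 2) (lam : ℂ),
      T lam = (K.trace * ∏ i, (lam - (ξ i - ((h i : ℕ) : ℂ) * η))) • (1 : Module.End ℂ H)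
        + ∑ i, (∏ j ∈ Finset.univ.erase i,
            ((lam - (ξ j - ((h j : ℕ) : ℂ) * η)) /
              ((ξ i - ((h i : ℕ) : ℂ) * η) - (ξ j - ((h j : ℕ) : ℂ) * η))))
          • T (ξ i - ((h i : ℕ) : ℂ) * η))
    (hfusion : ∀ a : Fin N, T (ξ a) * T (ξ a - η)
        = (af (ξ a) * df (ξ a - η) * K.det) • (1 : Module.End ℂ H))
    (t : Polynomial ℂ) (ht : t.natDegree = N) (htl : t.leadingCoeff = K.trace)
    (hfus : ∀ a : Fin N,
      t.eval (ξ a) * t.eval (ξ a - η) = af (ξ a) * df (ξ a - η) * K.det)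
    (v : H)
    (hv : ∀ h : Fin N → Fin 2,
      (b h) v = ∏ n, (t.eval (ξ n) / af (ξ n)) ^ ((h n : ℕ))) :
    ∀ lam : ℂ, (T lam) v = t.eval lam • v := by
  classical
  -- nonvanishing of `af (ξ i)`
  have hafne : ∀ i, af (ξ i) ≠ 0 := by
    intro i
    rw [haf]
    refine Finset.prod_ne_zero_iff.mpr fun j _ => ?_
    rcases eq_or_ne i j with rfl | hij
    · simpa using hη
    · intro hz
      exact hξ i j hij (-1) (by simp) (by push_cast; linear_combination hz)
  -- nonvanishing of `df (ξ i - η)`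
  have hdfne : ∀ i, df (ξ i - η) ≠ 0 := by
    intro i
    rw [hdf]
    refine Finset.prod_ne_zero_iff.mpr fun j _ => ?_
    rcases eq_or_ne i j with rfl | hij
    · intro hz; apply hη; linear_combination -hz
    · intro hz
      exact hξ i j hij 1 (by simp) (by push_cast; linear_combination hz)
  -- injectivity of the shifted points
  have hxinj : ∀ h : Fin N → Fin 2,
      Function.Injective (fun i => ξ i - ((h i : ℕ) : ℂ) * η) := by
    intro h i j hij
    dsimp only at hij
    by_contra hne
    set r : ℤ := ((h i : ℕ) : ℤ) - ((h j : ℕ) : ℤ) with hr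
    have hrmem : r ∈ ({-1, 0, 1} : Set ℤ) := by
      have h1 : (h i : ℕ) < 2 := (h i).isLt
      have h2 : (h j : ℕ) < 2 := (h j).isLt
      simp only [Set.mem_insert_iff, Set.mem_singleton_iff, hr]
      omega
    refine hξ i j hne r hrmem ?_
    have hc : (r : ℂ) = ((h i : ℕ) : ℂ) - ((h j : ℕ) : ℂ) := by
      rw [hr]; push_cast; ring
    rw [hc]; linear_combination hij
  -- the key step: action of `T` at the shifted points on `v` in the SoV basis
  have key : ∀ (h : Fin N → Fin 2) (i : Fin N),
      (b h) (T (ξ i - ((h i : ℕ) : ℂ) * η) v)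
        = t.eval (ξ i - ((h i : ℕ) : ℂ) * η) * (b h) v := by
    intro h i
    set A : Fin N → Module.End ℂ H := fun k => (af (ξ k))⁻¹ • T (ξ k) with hA
    have hAcomm : ∀ k l : Fin N, Commute (A k) (A l) := fun k l =>
      (Commute.smul_left (hcomm (ξ k) (ξ l)) _).smul_right _
    have commf : ∀ (g : Fin N → Fin 2) (s : Finset (Fin N)),
        (s : Set (Fin N)).Pairwise fun a c => Commute (A a ^ (g a : ℕ)) (A c ^ (g c : ℕ)) :=
      fun g s a _ c _ _ => (hAcomm a c).pow_pow _ _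
    set P : (Fin N → Fin 2) → (s : Finset (Fin N)) → Module.End ℂ H :=
      fun g s => s.noncommProd (fun k => A k ^ (g k : ℕ)) (commf g s) with hP
    have hbP : ∀ g : Fin N → Fin 2, b g = S ∘ₗ P g Finset.univ := fun g => hb g
    have hsplit : ∀ g : Fin N → Fin 2,
        P g Finset.univ = P g (Finset.univ.erase i) * (A i ^ (g i : ℕ)) := fun g =>
      (Finset.noncommProd_erase_mul Finset.univ (Finset.mem_univ i) _ (commf g _)).symm
    have herase : ∀ c : Fin 2,
        P h (Finset.univ.erase i) = P (Function.update h i c) (Finset.univ.erase i) := by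
      intro c
      exact Finset.noncommProd_congr rfl (fun j hj => by
        rw [Function.update_of_ne (Finset.mem_erase.mp hj).1]) _
    have hprod : ∀ c : Fin 2,
        (∏ n, (t.eval (ξ n) / af (ξ n)) ^ ((Function.update h i c n : ℕ)))
          = (t.eval (ξ i) / af (ξ i)) ^ (c : ℕ)
            * ∏ n ∈ Finset.univ.erase i, (t.eval (ξ n) / af (ξ n)) ^ ((h n : ℕ)) := by
      intro c
      rw [← Finset.mul_prod_erase _ _ (Finset.mem_univ i), Function.update_self]
      congr 1
      exact Finset.prod_congr rfl fun j hj => by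
        rw [Function.update_of_ne (Finset.mem_erase.mp hj).1]
    have hprodh : (∏ n, (t.eval (ξ n) / af (ξ n)) ^ ((h n : ℕ)))
          = (t.eval (ξ i) / af (ξ i)) ^ ((h i : ℕ))
            * ∏ n ∈ Finset.univ.erase i, (t.eval (ξ n) / af (ξ n)) ^ ((h n : ℕ)) :=
      (Finset.mul_prod_erase _ _ (Finset.mem_univ i)).symm
    have hi2 : h i = 0 ∨ h i = 1 := by omega
    rcases hi2 with hi0 | hi1
    · -- case h i = 0
      simp only [hi0, Fin.val_zero, Nat.cast_zero, zero_mul, sub_zero]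
      have hop : P h Finset.univ * T (ξ i)
          = af (ξ i) • P (Function.update h i 1) Finset.univ := by
        rw [hsplit h, hsplit (Function.update h i 1), ← herase 1, hi0, Function.update_self]
        simp only [Fin.val_zero, pow_zero, mul_one, Fin.val_one, pow_one]
        have hTA : af (ξ i) • A i = T (ξ i) := by
          rw [hA]
          dsimp only
          rw [smul_smul, mul_inv_cancel₀ (hafne i), one_smul]
        rw [← hTA, mul_smul_comm]
      have happ : (b h) (T (ξ i) v) = af (ξ i) * (b (Function.update h i 1)) v := by
        rw [hbP h, hbP (Function.update h i 1), LinearMap.comp_apply, LinearMap.comp_apply,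
          ← Module.End.mul_apply, hop, LinearMap.smul_apply, map_smul, smul_eq_mul]
      rw [happ, hv, hv, hprod 1, hprodh, hi0]
      simp only [Fin.val_one, pow_one, Fin.val_zero, pow_zero, one_mul]
      rw [← mul_assoc, mul_comm (af (ξ i)), div_mul_cancel₀ _ (hafne i)]
    · -- case h i = 1
      simp only [hi1, Fin.val_one, Nat.cast_one, one_mul]
      have hop : P h Finset.univ * T (ξ i - η)
          = (df (ξ i - η) * K.det) • P (Function.update h i 0) Finset.univ := by
        rw [hsplit h, hsplit (Function.update h i 0), ← herase 0, hi1, Function.update_self]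
        simp only [Fin.val_one, pow_one, Fin.val_zero, pow_zero, mul_one]
        rw [mul_assoc]
        have hAT : A i * T (ξ i - η) = (df (ξ i - η) * K.det) • 1 := by
          rw [hA]
          dsimp only
          have hsc : (af (ξ i))⁻¹ * (af (ξ i) * df (ξ i - η) * K.det)
              = df (ξ i - η) * K.det := by
            rw [show (af (ξ i))⁻¹ * (af (ξ i) * df (ξ i - η) * K.det)
                = ((af (ξ i))⁻¹ * af (ξ i)) * (df (ξ i - η) * K.det) from by ring,
              inv_mul_cancel₀ (hafne i), one_mul]
          rw [smul_mul_assoc, hfusion i, smul_smul, hsc]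
        rw [hAT, mul_smul_comm, mul_one]
      have happ : (b h) (T (ξ i - η) v)
          = (df (ξ i - η) * K.det) * (b (Function.update h i 0)) v := by
        rw [hbP h, hbP (Function.update h i 0), LinearMap.comp_apply, LinearMap.comp_apply,
          ← Module.End.mul_apply, hop, LinearMap.smul_apply, map_smul, smul_eq_mul]
      rw [happ, hv, hv, hprod 0, hprodh, hi1]
      simp only [Fin.val_zero, pow_zero, one_mul, Fin.val_one, pow_one]
      have hc : df (ξ i - η) * K.det
          = t.eval (ξ i - η) * (t.eval (ξ i) / af (ξ i)) := by
        field_simp [hafne i]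
        linear_combination -hfus i
      rw [hc, mul_assoc]
  -- conclusion via the interpolation formula and the dual basis
  intro lam
  rw [← sub_eq_zero]
  rw [← Module.forall_dual_apply_eq_zero_iff ℂ (T lam v - t.eval lam • v)]
  have hE : Module.Dual.eval ℂ H (T lam v - Polynomial.eval lam t • v) = 0 := by
    refine b.ext fun g => ?_
    simp only [map_sub, map_smul, LinearMap.sub_apply, LinearMap.smul_apply,
      Module.Dual.eval_apply, smul_eq_mul, LinearMap.zero_apply]
    rw [sub_eq_zero]
    have e1 := congrArg (fun O : Module.End ℂ H => (b g) (O v)) (hinterp g lam)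
    simp only [LinearMap.add_apply, LinearMap.smul_apply, LinearMap.sum_apply,
      Module.End.one_apply, map_add, map_smul, map_sum, smul_eq_mul] at e1
    rw [e1]
    rw [Finset.sum_congr rfl (fun i _ => by rw [key g i])]
    have hif := interp_formula (fun i => ξ i - ((g i : ℕ) : ℂ) * η) (hxinj g) t ht lam
    rw [htl] at hif
    rw [hif]
    rw [add_mul, Finset.sum_mul]
    congr 1
    refine Finset.sum_congr rfl fun i _ => by ring
  intro φ
  have := LinearMap.congr_fun hE φ
  simpa using this
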